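/- Let G be a K-CSA group and g ∈ G an element of infinite order. Then M(g) = { h ∈ G : the subgroup ⟨g, h⟩ is K-virtually abelian }, where a group is K-virtually abelian if it has an abelian subgroup of index at most K. -/

import Mathlib

/-- A subgroup `M` is virtually abelian if it has an abelian subgroup of finite index. -/
def IsVirtAbelian {G : Type*} [Group G] (M : Subgroup G) : Prop :=
  ∃ A : Subgroup G, A ≤ M ∧ (∀ x ∈ A, ∀ y ∈ A, x * y = y * x) ∧ A.relIndex M ≠ 0

/-- A subgroup `M` is `K`-virtually abelian if it has an abelian subgroup of index at most `K`. -/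
def IsKVirtAbelian {G : Type*} [Group G] (K : ℕ) (M : Subgroup G) : Prop :=
  ∃ A : Subgroup G, A ≤ M ∧ (∀ x ∈ A, ∀ y ∈ A, x * y = y * x) ∧
    A.relIndex M ≠ 0 ∧ A.relIndex M ≤ K

/-- `M` is `K`-virtually torsion-free abelian: it has a torsion-free abelian subgroup of
index at most `K`. -/
def IsKVirtTorsionFreeAbelian {G : Type*} [Group G] (K : ℕ) (M : Subgroup G) : Prop :=
  ∃ A : Subgroup G, A ≤ M ∧ (∀ x ∈ A, ∀ y ∈ A, x * y = y * x) ∧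
    (∀ x ∈ A, x ≠ 1 → ¬ IsOfFinOrder x) ∧ A.relIndex M ≠ 0 ∧ A.relIndex M ≤ K

/-- `M` is the (unique) maximal virtually abelian subgroup containing `g`: it is virtually
abelian, contains `g`, and contains every virtually abelian subgroup containing `g`. -/
def IsMaxVirtAbelianOf {G : Type*} [Group G] (g : G) (M : Subgroup G) : Prop :=
  g ∈ M ∧ IsVirtAbelian M ∧ ∀ M' : Subgroup G, g ∈ M' → IsVirtAbelian M' → M' ≤ M

/-- `G` is a `K`-CSA group: every finite subgroup has order at most `K`; every element of
infinite order lies in a unique maximal virtually abelian subgroup `M(g)`, which is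
`K`-virtually torsion-free abelian and equal to its own normalizer. -/
def IsKCSAGroup (K : ℕ) (G : Type*) [Group G] : Prop :=
  0 < K ∧
  (∀ H : Subgroup G, (H : Set G).Finite → Nat.card H ≤ K) ∧
  (∀ g : G, ¬ IsOfFinOrder g → ∃ M : Subgroup G,
    IsMaxVirtAbelianOf g M ∧ IsKVirtTorsionFreeAbelian K M ∧ Subgroup.normalizer (M : Set G) = M)

/-- In a `K`-CSA group, for `g` of infinite order,
`M(g) = { h | ⟨g,h⟩ is K-virtually abelian }`. -/
theorem stmt_6 {G : Type*} [Group G] {K : ℕ} (hG : IsKCSAGroup K G) (g : G)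
    (hg : ¬ IsOfFinOrder g) (M : Subgroup G) (hM : IsMaxVirtAbelianOf g M) :
    ∀ h : G, h ∈ M ↔ IsKVirtAbelian K (Subgroup.closure ({g, h} : Set G)) := by
  obtain ⟨-, -, hex⟩ := hG
  obtain ⟨M', hM', hKtf, -⟩ := hex g hg
  have hMM' : M = M' :=
    le_antisymm (hM'.2.2 M hM.1 hM.2.1) (hM.2.2 M' hM'.1 hM'.2.1)
  subst hMM'
  obtain ⟨A, hAM, hAab, -, hA0, hAK⟩ := hKtf
  intro h
  constructor
  · intro hh
    set H := Subgroup.closure ({g, h} : Set G) with hH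
    have hHM : H ≤ M := by
      rw [hH, Subgroup.closure_le]
      rintro x (rfl | rfl)
      · exact hM.1
      · exact hh
    refine ⟨A ⊓ H, inf_le_right, fun x hx y hy => hAab x hx.1 y hy.1, ?_, ?_⟩
    · rw [Subgroup.inf_relIndex_right]
      intro h0
      exact hA0 (Subgroup.relIndex_eq_zero_of_le_right hHM h0)
    · rw [Subgroup.inf_relIndex_right]
      calc A.relIndex H ≤ A.relIndex M := Subgroup.relIndex_le_of_le_right hHM hA0
        _ ≤ K := hAK
  · rintro ⟨B, hBH, hBab, hB0, hBK⟩
    have hgH : g ∈ Subgroup.closure ({g, h} : Set G) :=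
      Subgroup.subset_closure (Or.inl rfl)
    have hhH : h ∈ Subgroup.closure ({g, h} : Set G) :=
      Subgroup.subset_closure (Or.inr rfl)
    exact hM.2.2 _ hgH ⟨B, hBH, hBab, hB0⟩ hhH
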